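/- Let g₁, g₂ be elements of the Nil group with d := g₁¹g₂² − g₁²g₂¹ ≠ 0, and set h := ((g₁³g₂¹ − g₁¹g₂³)/d, (g₁³g₂² − g₁²g₂³)/d, 0). Then the conjugates h·g₁·h⁻¹ and h·g₂·h⁻¹ have vanishing third component and the same first two components as g₁ and g₂ respectively, i.e. h·gᵢ·h⁻¹ = (gᵢ¹, gᵢ², 0) for i = 1,2; moreover h·g₃·h⁻¹ = g₃ for g₃ = (0,0,d). -/

import Mathlib

noncomputable section

/-- Multiplication in the Nil (Bianchi II) group on ℝ³. -/
def nilMul (g h : ℝ × ℝ × ℝ) : ℝ × ℝ × ℝ :=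
  (g.1 + h.1, g.2.1 + h.2.1, g.2.2 + h.2.2 + g.1 * h.2.1)

/-- Inverse in the Nil group. -/
def nilInv (g : ℝ × ℝ × ℝ) : ℝ × ℝ × ℝ :=
  (-g.1, -g.2.1, -g.2.2 + g.1 * g.2.1)

/-- Conjugating `g₁`, `g₂` by the specific element `h` kills their third components
while fixing the first two components, and `h` fixes `g₃ = (0,0,d)`. -/
theorem nil_conjugation_normalizes (g₁ g₂ : ℝ × ℝ × ℝ)
    (d : ℝ) (hd : d = g₁.1 * g₂.2.1 - g₁.2.1 * g₂.1) (hd0 : d ≠ 0)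
    (h : ℝ × ℝ × ℝ)
    (hh : h = ((g₁.2.2 * g₂.1 - g₁.1 * g₂.2.2) / d,
               (g₁.2.2 * g₂.2.1 - g₁.2.1 * g₂.2.2) / d, (0 : ℝ))) :
    nilMul (nilMul h g₁) (nilInv h) = (g₁.1, g₁.2.1, (0 : ℝ)) ∧
    nilMul (nilMul h g₂) (nilInv h) = (g₂.1, g₂.2.1, (0 : ℝ)) ∧
    nilMul (nilMul h ((0 : ℝ), (0 : ℝ), d)) (nilInv h) = ((0 : ℝ), (0 : ℝ), d) := by
  subst hh hd
  refine ⟨?_, ?_, ?_⟩ <;> simp only [nilMul, nilInv, Prod.mk.injEq] <;>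
    refine ⟨by ring, by ring, ?_⟩ <;> field_simp [show g₁.1 * g₂.2.1 - g₂.1 * g₁.2.1 ≠ 0 by rwa [mul_comm g₂.1]] <;> ring
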